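/- Let V be a partial order viewed as a category, and let ♭ : V → V be a monotone map with ♭(v) ≤ v for all v and ♭(♭(v)) = ♭(v). Define, for each v ∈ V, J(v) to be the set of sieves S on v such that the morphism ♭(v) ⟶ v belongs to S. Then J is a Grothendieck topology on V. -/

import Mathlib

open CategoryTheory

private lemma arrows_congr_aux {V : Type*} [PartialOrder V] {v : V} (R : Sieve v)
    {x y : V} (e : x = y) (hx : x ≤ v) (hy : y ≤ v) :
    R.arrows (homOfLE hx) → R.arrows (homOfLE hy) := by
  subst e; exact id

/-- Let `♭ : V → V` be monotone with `♭ v ≤ v` and `♭ (♭ v) = ♭ v`.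
Then `J(v) = { sieves S on v | (♭(v) ⟶ v) ∈ S }` is a Grothendieck topology on `V`
(the quantization Grothendieck topology). -/
theorem quantization_grothendieckTopology_exists
    {V : Type*} [PartialOrder V]
    {b : V → V} (hb : Monotone b) (hle : ∀ v, b v ≤ v) (hidem : ∀ v, b (b v) = b v) :
    ∃ J : GrothendieckTopology V,
      ∀ (v : V) (S : Sieve v), S ∈ J v ↔ S.arrows (homOfLE (hle v)) := by
  refine ⟨⟨fun v => {S | S.arrows (homOfLE (hle v))}, ?_, ?_, ?_⟩, fun v S => Iff.rfl⟩
  · intro v; trivial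
  · intro v w S f hS
    have : S.arrows (homOfLE ((hle w).trans f.le)) :=
      S.downward_closed hS (homOfLE (hb f.le))
    have e : homOfLE (hle w) ≫ f = homOfLE ((hle w).trans f.le) := Subsingleton.elim _ _
    simpa [e] using this
  · intro v S hS R hR
    have h := hR hS
    simp only [Set.mem_setOf_eq] at h ⊢
    have h2 : R.arrows (homOfLE ((hle (b v)).trans (hle v))) := by simpa using h
    exact arrows_congr_aux R (hidem v) _ (hle v) h2
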